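/- arXiv:1604.02063 — 2 statements merged into one kernel-verified Lean document; each statement's English description precedes it below -/
import Mathlib

section
/- In the homogeneous universal enveloping algebra U_h(sl₂), with generators x, y, z, h where h is central and yx = xy + 2xh, zx = xz - yh, zy = yz + 2zh, for all natural numbers a, b the normal-ordering identity (z^a/a!)(y^b/b!) = ∑_{k=0}^{b} (2a)^k · (y^{b-k}/(b-k)!) · (z^a/a!) · (h^k/k!) holds. -/
namespace UhSl2

/-- Generators of `U_h(sl₂)`. -/
inductive Gen : Type | x | y | z | h

variable (K : Type*) [Field K]

open FreeAlgebra in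
/-- Defining relations of `U_h(sl₂)`: `h` is central, `yx = xy + 2xh`,
`zx = xz - yh`, `zy = yz + 2zh`. -/
inductive Rel : FreeAlgebra K Gen → FreeAlgebra K Gen → Prop
  | yx : Rel (ι K Gen.y * ι K Gen.x) (ι K Gen.x * ι K Gen.y + 2 * (ι K Gen.x * ι K Gen.h))
  | zx : Rel (ι K Gen.z * ι K Gen.x) (ι K Gen.x * ι K Gen.z - ι K Gen.y * ι K Gen.h)
  | zy : Rel (ι K Gen.z * ι K Gen.y) (ι K Gen.y * ι K Gen.z + 2 * (ι K Gen.z * ι K Gen.h))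
  | hx : Rel (ι K Gen.h * ι K Gen.x) (ι K Gen.x * ι K Gen.h)
  | hy : Rel (ι K Gen.h * ι K Gen.y) (ι K Gen.y * ι K Gen.h)
  | hz : Rel (ι K Gen.h * ι K Gen.z) (ι K Gen.z * ι K Gen.h)

/-- The homogeneous universal enveloping algebra `U_h(sl₂)`. -/
abbrev Uh := RingQuot (Rel K)

noncomputable def X : Uh K := RingQuot.mkAlgHom K (Rel K) (FreeAlgebra.ι K Gen.x)
noncomputable def Y : Uh K := RingQuot.mkAlgHom K (Rel K) (FreeAlgebra.ι K Gen.y)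
noncomputable def Z : Uh K := RingQuot.mkAlgHom K (Rel K) (FreeAlgebra.ι K Gen.z)
noncomputable def H : Uh K := RingQuot.mkAlgHom K (Rel K) (FreeAlgebra.ι K Gen.h)

/-- Divided power `u^n / n!`. -/
noncomputable def dp (n : ℕ) (u : Uh K) : Uh K := (n.factorial : K)⁻¹ • u ^ n

end UhSl2

open UhSl2

section Aux

variable (K : Type*) [Field K]

lemma hy_comm : H K * Y K = Y K * H K := by
  simpa only [H, Y, map_mul] using RingQuot.mkAlgHom_rel K Rel.hy

lemma hz_comm : H K * Z K = Z K * H K := by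
  simpa only [H, Z, map_mul] using RingQuot.mkAlgHom_rel K Rel.hz

lemma zy_rel : Z K * Y K = Y K * Z K + (2 : K) • (Z K * H K) := by
  have := RingQuot.mkAlgHom_rel K (Rel.zy (K := K))
  simp only [map_mul, map_add, map_ofNat] at this
  rw [Algebra.smul_def, map_ofNat]
  simpa only [Z, Y, H] using this

lemma zpow_y (a : ℕ) :
    Z K ^ a * Y K = Y K * Z K ^ a + (2 * (a : K)) • (Z K ^ a * H K) := by
  induction a with
  | zero => simp
  | succ n ih =>
    have hZn : H K * Z K ^ n = Z K ^ n * H K :=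
      ((Commute.pow_right (hz_comm K) n)).eq
    calc Z K ^ (n + 1) * Y K
        = Z K ^ n * (Z K * Y K) := by rw [pow_succ, mul_assoc]
      _ = Z K ^ n * (Y K * Z K + (2 : K) • (Z K * H K)) := by rw [zy_rel]
      _ = Z K ^ n * Y K * Z K + (2 : K) • (Z K ^ (n + 1) * H K) := by
            rw [mul_add, mul_smul_comm, ← mul_assoc, ← mul_assoc, ← pow_succ]
      _ = (Y K * Z K ^ n + (2 * (n : K)) • (Z K ^ n * H K)) * Z K
            + (2 : K) • (Z K ^ (n + 1) * H K) := by rw [ih]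
      _ = Y K * Z K ^ (n + 1) + (2 * (n : K)) • (Z K ^ (n + 1) * H K)
            + (2 : K) • (Z K ^ (n + 1) * H K) := by
            have e1 : Y K * Z K ^ n * Z K = Y K * Z K ^ (n + 1) := by
              rw [mul_assoc, ← pow_succ]
            have e2 : Z K ^ n * H K * Z K = Z K ^ (n + 1) * H K := by
              rw [mul_assoc, hz_comm, ← mul_assoc, ← pow_succ]
            rw [add_mul, smul_mul_assoc, e1, e2]
      _ = Y K * Z K ^ (n + 1) + (2 * ((n : K) + 1)) • (Z K ^ (n + 1) * H K) := by
            rw [add_assoc, ← add_smul]; ring_nf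
      _ = Y K * Z K ^ (n + 1) + (2 * ((n + 1 : ℕ) : K)) • (Z K ^ (n + 1) * H K) := by
            push_cast; ring_nf

lemma dpZ_y (a : ℕ) :
    dp K a (Z K) * Y K
      = Y K * dp K a (Z K) + (2 * (a : K)) • (dp K a (Z K) * H K) := by
  simp only [dp, smul_mul_assoc, mul_smul_comm, smul_add]
  rw [zpow_y, smul_add, smul_comm]

lemma dpH_comm_Y (k : ℕ) : dp K k (H K) * Y K = Y K * dp K k (H K) := by
  simp only [dp, smul_mul_assoc, mul_smul_comm]
  congr 1
  exact ((Commute.pow_left (hy_comm K) k)).eq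

variable [CharZero K]

lemma dp_mul_self (n : ℕ) (u : Uh K) :
    dp K n u * u = ((n + 1 : ℕ) : K) • dp K (n + 1) u := by
  simp only [dp, smul_mul_assoc, ← pow_succ, smul_smul]
  congr 1
  rw [Nat.factorial_succ]
  have h1 : ((n + 1 : ℕ) : K) ≠ 0 := Nat.cast_ne_zero.mpr (Nat.succ_ne_zero n)
  have h2 : ((n.factorial : ℕ) : K) ≠ 0 := Nat.cast_ne_zero.mpr n.factorial_ne_zero
  push_cast
  field_simp

lemma dp_self_mul (n : ℕ) (u : Uh K) :
    u * dp K n u = ((n + 1 : ℕ) : K) • dp K (n + 1) u := by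
  rw [← dp_mul_self]
  simp only [dp, smul_mul_assoc, mul_smul_comm]
  rw [← pow_succ, ← pow_succ']

/-- The key single-step computation. -/
lemma step_lemma (a m k : ℕ) :
    dp K m (Y K) * dp K a (Z K) * dp K k (H K) * Y K
      = ((m + 1 : ℕ) : K) • (dp K (m + 1) (Y K) * dp K a (Z K) * dp K k (H K))
        + ((2 * (a : K)) * ((k + 1 : ℕ) : K)) •
            (dp K m (Y K) * dp K a (Z K) * dp K (k + 1) (H K)) := by
  have h1 : dp K k (H K) * Y K = Y K * dp K k (H K) := dpH_comm_Y K k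
  have h2 := dpZ_y K a
  have h3 := dp_mul_self K m (Y K)
  have h4 := dp_self_mul K k (H K)
  calc dp K m (Y K) * dp K a (Z K) * dp K k (H K) * Y K
      = dp K m (Y K) * dp K a (Z K) * (Y K * dp K k (H K)) := by
        rw [mul_assoc, h1]
    _ = dp K m (Y K) * (dp K a (Z K) * Y K) * dp K k (H K) := by
        rw [← mul_assoc, mul_assoc (dp K m (Y K))]
    _ = dp K m (Y K) * (Y K * dp K a (Z K) + (2 * (a : K)) • (dp K a (Z K) * H K))
          * dp K k (H K) := by rw [h2]
    _ = dp K m (Y K) * Y K * dp K a (Z K) * dp K k (H K)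
          + (2 * (a : K)) •
              (dp K m (Y K) * (dp K a (Z K) * (H K * dp K k (H K)))) := by
        rw [mul_add, mul_smul_comm, add_mul, smul_mul_assoc]
        congr 2
        · rw [mul_assoc]
        · rw [mul_assoc, mul_assoc]
    _ = ((m + 1 : ℕ) : K) • (dp K (m + 1) (Y K) * dp K a (Z K) * dp K k (H K))
          + ((2 * (a : K)) * ((k + 1 : ℕ) : K)) •
              (dp K m (Y K) * dp K a (Z K) * dp K (k + 1) (H K)) := by
        rw [h3, h4, smul_mul_assoc, smul_mul_assoc, mul_smul_comm, mul_smul_comm,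
          smul_smul, mul_assoc]
        simp only [mul_assoc]

end Aux

/-- In `U_h(sl₂)`: `(z^a/a!)(y^b/b!) = ∑_{k=0}^{b} (2a)^k (y^{b-k}/(b-k)!)(z^a/a!)(h^k/k!)`. -/
theorem zy_normal_order (K : Type*) [Field K] [CharZero K] (a b : ℕ) :
    dp K a (Z K) * dp K b (Y K) =
      ∑ k ∈ Finset.range (b + 1),
        ((2 * (a : K)) ^ k) • (dp K (b - k) (Y K) * dp K a (Z K) * dp K k (H K)) := by
  induction b with
  | zero => simp [dp]
  | succ b ih =>
    set g : ℕ → Uh K := fun k =>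
      ((2 * (a : K)) ^ k) • (dp K (b + 1 - k) (Y K) * dp K a (Z K) * dp K k (H K))
      with hg
    have key : dp K a (Z K) * dp K b (Y K) * Y K
        = ((b + 1 : ℕ) : K) • ∑ k ∈ Finset.range (b + 2), g k := by
      rw [ih, Finset.sum_mul]
      have expand : ∀ k ∈ Finset.range (b + 1),
          ((2 * (a : K)) ^ k) • (dp K (b - k) (Y K) * dp K a (Z K) * dp K k (H K)) * Y K
            = ((b + 1 - k : ℕ) : K) • g k + ((k + 1 : ℕ) : K) • g (k + 1) := by
        intro k hk
        have hkb : k ≤ b := Nat.lt_succ_iff.mp (Finset.mem_range.mp hk)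
        have hsub : b - k + 1 = b + 1 - k := (Nat.succ_sub hkb).symm
        have hsub2 : b + 1 - (k + 1) = b - k := Nat.succ_sub_succ b k
        rw [smul_mul_assoc, step_lemma, hg]
        simp only [hsub, hsub2, smul_add, smul_smul, pow_succ]
        ring_nf
      rw [Finset.sum_congr rfl expand, Finset.sum_add_distrib]
      have eA : ∑ k ∈ Finset.range (b + 1), ((b + 1 - k : ℕ) : K) • g k
          = ∑ k ∈ Finset.range (b + 2), ((b + 1 - k : ℕ) : K) • g k := by
        rw [Finset.sum_range_succ (fun k => ((b + 1 - k : ℕ) : K) • g k) (b + 1)]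
        simp
      have eB : ∑ k ∈ Finset.range (b + 1), ((k + 1 : ℕ) : K) • g (k + 1)
          = ∑ k ∈ Finset.range (b + 2), ((k : ℕ) : K) • g k := by
        rw [Finset.sum_range_succ' (fun k => ((k : ℕ) : K) • g k) (b + 1)]
        simp
      rw [eA, eB, ← Finset.sum_add_distrib, Finset.smul_sum]
      refine Finset.sum_congr rfl fun k hk => ?_
      have hkb : k ≤ b + 1 := Nat.lt_succ_iff.mp (Finset.mem_range.mp hk)
      rw [← add_smul]
      congr 1
      rw [Nat.cast_sub hkb]
      push_cast
      ring
    have hne : ((b + 1 : ℕ) : K) ≠ 0 := Nat.cast_ne_zero.mpr (Nat.succ_ne_zero b)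
    have hdp : dp K (b + 1) (Y K) = ((b + 1 : ℕ) : K)⁻¹ • (dp K b (Y K) * Y K) := by
      rw [dp_mul_self, inv_smul_smul₀ hne]
    rw [hdp, mul_smul_comm, ← mul_assoc, key, inv_smul_smul₀ hne]
end

section
/- In the homogeneous universal enveloping algebra U_h(sl₂), for all natural numbers a, b the normal-ordering identity (y^a/a!)(x^b/b!) = ∑_{k=0}^{a} (2b)^k · (x^b/b!) · (y^{a-k}/(a-k)!) · (h^k/k!) holds. -/
namespace UhSl2

variable (K : Type*) [Field K]

lemma HX : H K * X K = X K * H K := by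
  have := RingQuot.mkAlgHom_rel K (Rel.hx (K := K))
  simpa [X, H, map_mul] using this

lemma HY : H K * Y K = Y K * H K := by
  have := RingQuot.mkAlgHom_rel K (Rel.hy (K := K))
  simpa [Y, H, map_mul] using this

lemma YX : Y K * X K = X K * Y K + 2 * (X K * H K) := by
  have := RingQuot.mkAlgHom_rel K (Rel.yx (K := K))
  simpa [X, Y, H, map_mul, map_add, map_ofNat] using this

lemma two_mul_eq (z : Uh K) : (2 : Uh K) * z = (2 : K) • z := by
  rw [Algebra.smul_def, map_ofNat]

lemma Y_Xpow (b : ℕ) :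
    Y K * (X K) ^ b = (X K) ^ b * (Y K + (2 * (b : K)) • H K) := by
  induction b with
  | zero => simp
  | succ b ih =>
    have hx' : H K * (X K) ^ b = (X K) ^ b * H K :=
      (Commute.pow_right (HX K) b)
    rw [pow_succ', ← mul_assoc, YX, add_mul, mul_assoc, ih, mul_assoc, mul_assoc, hx',
      two_mul_eq]
    simp only [mul_add, smul_add, mul_smul_comm, smul_mul_assoc, smul_smul, ← mul_assoc]
    match_scalars <;> ring

lemma Ypow_Xpow (a b : ℕ) :
    (Y K) ^ a * (X K) ^ b = (X K) ^ b * (Y K + (2 * (b : K)) • H K) ^ a := by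
  induction a with
  | zero => simp
  | succ a ih =>
    rw [pow_succ', mul_assoc, ih, ← mul_assoc, Y_Xpow, mul_assoc, ← pow_succ']

lemma mul_natCast_eq (z : Uh K) (n : ℕ) : z * (n : Uh K) = (n : K) • z := by
  rw [Algebra.smul_def, ← map_natCast (algebraMap K (Uh K)), ← Algebra.commutes]

end UhSl2

open UhSl2

/-- In `U_h(sl₂)`: `(y^a/a!)(x^b/b!) = ∑_{k=0}^{a} (2b)^k (x^b/b!)(y^{a-k}/(a-k)!)(h^k/k!)`. -/
theorem yx_normal_order (K : Type*) [Field K] [CharZero K] (a b : ℕ) :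
    dp K a (Y K) * dp K b (X K) =
      ∑ k ∈ Finset.range (a + 1),
        ((2 * (b : K)) ^ k) • (dp K b (X K) * dp K (a - k) (Y K) * dp K k (H K)) := by
  have hcom : Commute (H K) (Y K) := HY K
  have hc : Commute ((2 * (b:K)) • H K) (Y K) := hcom.smul_left _
  simp only [dp]
  rw [smul_mul_assoc, mul_smul_comm, smul_smul, Ypow_Xpow,
    add_comm (Y K), hc.add_pow, Finset.mul_sum, Finset.smul_sum]
  refine Finset.sum_congr rfl (fun k hk => ?_)
  have hka : k ≤ a := Nat.lt_succ_iff.mp (Finset.mem_range.mp hk)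
  rw [smul_pow, smul_mul_assoc, (hcom.pow_pow k (a - k)).eq, mul_natCast_eq]
  simp only [smul_mul_assoc, mul_smul_comm, smul_smul, ← mul_assoc]
  rw [Nat.cast_choose K hka]
  congr 1
  have h1 : (a.factorial : K) ≠ 0 := Nat.cast_ne_zero.mpr a.factorial_ne_zero
  have h2 : (k.factorial : K) ≠ 0 := Nat.cast_ne_zero.mpr k.factorial_ne_zero
  have h3 : ((a - k).factorial : K) ≠ 0 := Nat.cast_ne_zero.mpr (a - k).factorial_ne_zero
  field_simp
end
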